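/- Every eigenvalue λ > 1 of P†P is an eigenvalue of Q†Q with the same multiplicity: for every real λ > 1, the dimension of the λ-eigenspace ker(P†P − λ·id) equals the dimension of ker(Q†Q − λ·id). -/

import Mathlib

open LinearMap Module

set_option maxHeartbeats 800000 in
lemma aux9 {V : Type*} [NormedAddCommGroup V] [InnerProductSpace ℝ V]
    [FiniteDimensional ℝ V] (P : V →ₗ[ℝ] V) (hP : P ∘ₗ P = P)
    (l : ℝ) (hl0 : l ≠ 0) (hl1 : l ≠ 1) :
    finrank ℝ (ker (adjoint P ∘ₗ P - l • LinearMap.id)) ≤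
    finrank ℝ (ker (adjoint (LinearMap.id - P) ∘ₗ (LinearMap.id - P) - l • LinearMap.id)) := by
  have hPP : ∀ x, P (P x) = P x := fun x => congrArg (fun f => f x) hP
  have hid : adjoint (LinearMap.id : V →ₗ[ℝ] V) = LinearMap.id := by
    rw [← Module.End.one_eq_id, ← LinearMap.star_eq_adjoint, star_one]
  have hPa : ∀ x, adjoint P (adjoint P x) = adjoint P x := by
    intro x
    have : adjoint P ∘ₗ adjoint P = adjoint P := by
      rw [← adjoint_comp, hP]
    exact congrArg (fun f => f x) this
  have hmem : ∀ x : V, x ∈ ker (adjoint P ∘ₗ P - l • LinearMap.id) ↔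
      adjoint P (P x) = l • x := by
    intro x
    simp [LinearMap.mem_ker, sub_eq_zero]
  set K1 := ker (adjoint P ∘ₗ P - l • LinearMap.id) with hK1
  set K2 := ker (adjoint (LinearMap.id - P) ∘ₗ (LinearMap.id - P) - l • LinearMap.id) with hK2
  have key : ∀ x : V, adjoint P (P x) = l • x →
      (l • x - P x) ∈ K2 := by
    intro x hx
    have h1 : adjoint P x = x := by
      have hx' : x = l⁻¹ • adjoint P (P x) := by rw [hx, smul_smul, inv_mul_cancel₀ hl0, one_smul]
      calc adjoint P x = adjoint P (l⁻¹ • adjoint P (P x)) := by rw [← hx']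
        _ = l⁻¹ • adjoint P (adjoint P (P x)) := by rw [map_smul]
        _ = l⁻¹ • adjoint P (P x) := by rw [hPa]
        _ = x := by rw [← hx']
    rw [hK2, LinearMap.mem_ker]
    simp only [LinearMap.sub_apply, comp_apply, LinearMap.smul_apply, id_apply, hid, map_sub, map_smul, hPP, h1, hx,
      sub_eq_zero]
    module
  have inj : ∀ x : V, l • x - P x = 0 → x = 0 := by
    intro x h0
    have hPx : P x = l • x := by rw [sub_eq_zero] at h0; exact h0.symm
    have h2 : P (P x) = P x := hPP x
    rw [hPx, map_smul, hPx, smul_smul] at h2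
    have h3 : (l * (l - 1)) • x = 0 := by
      have h4 : (l * l) • x - l • x = 0 := by rw [h2]; simp
      calc (l * (l - 1)) • x = (l * l) • x - l • x := by rw [← sub_smul]; ring_nf
        _ = 0 := h4
    have hne : l * (l - 1) ≠ 0 := mul_ne_zero hl0 (sub_ne_zero.mpr hl1)
    rcases smul_eq_zero.mp h3 with h | h
    · exact absurd h hne
    · exact h
  let f : K1 →ₗ[ℝ] K2 :=
    LinearMap.codRestrict K2 ((l • LinearMap.id - P) ∘ₗ K1.subtype)
      (fun x => by
        have hx := (hmem x.1).mp x.2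
        simpa using key x.1 hx)
  have hf : Function.Injective f := by
    rw [← LinearMap.ker_eq_bot, LinearMap.ker_eq_bot']
    intro m hm
    have hm' : l • (m : V) - P m = 0 := by
      have := congrArg (Subtype.val) hm
      simpa [f, LinearMap.codRestrict] using this
    exact Subtype.ext (inj m.1 hm')
  exact LinearMap.finrank_le_finrank_of_injective hf

/-- Every eigenvalue `λ > 1` of `P†P` is an eigenvalue of `Q†Q` with the same multiplicity,
where `Q = id − P` is the complementary projection. -/
theorem statement9 {V : Type*} [NormedAddCommGroup V] [InnerProductSpace ℝ V]
    [FiniteDimensional ℝ V] (P Q : V →ₗ[ℝ] V) (hP : P ∘ₗ P = P)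
    (hQ : Q = LinearMap.id - P) (l : ℝ) (hl : 1 < l) :
    Module.finrank ℝ (LinearMap.ker (LinearMap.adjoint P ∘ₗ P - l • LinearMap.id)) =
    Module.finrank ℝ (LinearMap.ker (LinearMap.adjoint Q ∘ₗ Q - l • LinearMap.id)) := by
  have hl0 : l ≠ 0 := by linarith
  have hl1 : l ≠ 1 := by linarith
  have hPP : ∀ x, P (P x) = P x := fun x => congrArg (fun f => f x) hP
  have hQQ : Q ∘ₗ Q = Q := by
    rw [hQ]
    ext x
    simp [hPP x]
  have hPQ : LinearMap.id - Q = P := by rw [hQ]; exact sub_sub_cancel _ _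
  have le1 := aux9 P hP l hl0 hl1
  have le2 := aux9 Q hQQ l hl0 hl1
  rw [← hQ] at le1
  rw [hPQ] at le2
  exact le_antisymm le1 le2
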